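/- Under Assumptions A1, A2 and the cone condition A4, for any sequence λ_n ∈ (0,1] with λ_n ↓ 0, the regularized value functions are uniformly bounded: sup_{n∈ℕ, t∈𝕋, u∈W} |V^{λ_n}(t,u)| < ∞. -/

import Mathlib

open MeasureTheory Filter Topology
open scoped NNReal ENNReal

/-- Borel subprobability measures on `E` with the topology of weak convergence. -/
abbrev SubProb (E : Type*) [MeasurableSpace E] : Type _ :=
  {μ : FiniteMeasure E // μ Set.univ ≤ 1}

/-- Assumption A4 (cone condition) for a set `A ⊆ ℝ^ℓ`: there are `ϑ > 0` and `ι ∈ (0,π/2]`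
such that every `a ∈ A` is the vertex of a cone of angle `ι` whose intersection with the
ball `B_ϑ(a)` lies in `A` (for `ℓ = 1` the cone is a half-line, so this reduces to
`[a-ϑ,a] ⊆ A` or `[a,a+ϑ] ⊆ A`). -/
def ConeCondition {l : ℕ} (Aset : Set (EuclideanSpace ℝ (Fin l))) : Prop :=
  ∃ θ : ℝ, 0 < θ ∧ ∃ ι : ℝ, 0 < ι ∧ ι ≤ Real.pi / 2 ∧
    ∀ a ∈ Aset, ∃ v : EuclideanSpace ℝ (Fin l), ‖v‖ = 1 ∧
      {x : EuclideanSpace ℝ (Fin l) |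
        dist x a < θ ∧ ‖x - a‖ * Real.cos ι ≤ (inner ℝ (x - a) v : ℝ)} ⊆ Aset

section Regularized

variable {l : ℕ} {S W S0 : Type*}
variable [MetricSpace S] [CompactSpace S] [Nonempty S]
  [MeasurableSpace S] [BorelSpace S] [SecondCountableTopology S]
variable [Fintype W] [Nonempty W]
variable (T : ℕ) (Aset : Set (EuclideanSpace ℝ (Fin l)))
variable (Ψ : ℕ → W → S0)
variable (f0 : ℕ → S0 → EuclideanSpace ℝ (Fin l) → SubProb S → ℝ)
variable (P0 : ℕ → W → EuclideanSpace ℝ (Fin l) → SubProb S → W → ℝ)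
variable (g0 : S0 → SubProb S → ℝ)
variable (μT : W → SubProb S) (m : ℕ → W → SubProb S)

/-- `Vaux λ j u` is the regularized value function `V^λ(T-j, u)`, defined by backward
induction (`j` = number of remaining periods) via the explicit log-integral form of the
entropy-regularized dynamic programming equation:
`V^λ(t,u) = λ ln ∫_A exp((f⁰_t(Ψ_t(u),a,m_t(u)) + Σ_{u'} V^λ(t+1,u') P⁰_{t+1}(u,a,m_t(u),u'))/λ) da`,
with terminal value `V^λ(T,u) = g⁰(Ψ_T(u),μ_T(u))`. -/
noncomputable def Vaux (lam : ℝ) : ℕ → W → ℝ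
  | 0, u => g0 (Ψ T u) (μT u)
  | (j + 1), u =>
      lam * Real.log (∫ a in Aset,
        Real.exp ((f0 (T - (j + 1)) (Ψ (T - (j + 1)) u) a (m (T - (j + 1)) u)
          + ∑ u' : W, Vaux lam j u' * P0 (T - (j + 1)) u a (m (T - (j + 1)) u) u') / lam))

/-- The regularized value function `V^λ(t,u)` at calendar time `t`. -/
noncomputable def Vlam (lam : ℝ) (t : ℕ) (u : W) : ℝ :=
  Vaux T Aset Ψ f0 P0 g0 μT m lam (T - t) u

/-- The Gibbs exponent
`G^λ_t(u,a) = f⁰_t(Ψ_t(u),a,m_t(u)) + Σ_{u'} V^λ(t+1,u') P⁰_{t+1}(u,a,m_t(u),u')`. -/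
noncomputable def Gexp (lam : ℝ) (t : ℕ) (u : W) (a : EuclideanSpace ℝ (Fin l)) : ℝ :=
  f0 t (Ψ t u) a (m t u)
    + ∑ u' : W, Vlam T Aset Ψ f0 P0 g0 μT m lam (t + 1) u' * P0 t u a (m t u) u'

/-- The Gibbs-form optimal regularized control: the density on `A`
`α^λ_t(u)(a) = exp(G^λ_t(u,a)/λ) / ∫_A exp(G^λ_t(u,a')/λ) da'`. -/
noncomputable def gibbsDensity (lam : ℝ) (t : ℕ) (u : W) (a : EuclideanSpace ℝ (Fin l)) : ℝ :=
  Real.exp (Gexp T Aset Ψ f0 P0 g0 μT m lam t u a / lam) /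
    ∫ a' in Aset, Real.exp (Gexp T Aset Ψ f0 P0 g0 μT m lam t u a' / lam)

/-- The (differential) Shannon entropy of the Gibbs density:
`H(α^λ_t(u)) = -∫_A α^λ_t(u)(a) ln α^λ_t(u)(a) da`. -/
noncomputable def entGibbs (lam : ℝ) (t : ℕ) (u : W) : ℝ :=
  -∫ a in Aset, gibbsDensity T Aset Ψ f0 P0 g0 μT m lam t u a *
      Real.log (gibbsDensity T Aset Ψ f0 P0 g0 μT m lam t u a)

end Regularized



lemma key_log_int_bound {l : ℕ} (Aset : Set (EuclideanSpace ℝ (Fin l)))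
    (hc : IsCompact Aset) (hvol : 0 < volume Aset)
    {lam : ℝ} (hlam : lam ∈ Set.Ioc (0:ℝ) 1)
    (G : EuclideanSpace ℝ (Fin l) → ℝ) (hG : ContinuousOn G Aset)
    (B : ℝ) (hB : ∀ a ∈ Aset, |G a| ≤ B) :
    |lam * Real.log (∫ a in Aset, Real.exp (G a / lam))|
      ≤ B + |Real.log (volume Aset).toReal| := by
  obtain ⟨hlam0, hlam1⟩ := hlam
  set vA := (volume Aset).toReal with hvAdef
  have hvA : 0 < vA := ENNReal.toReal_pos hvol.ne' hc.measure_lt_top.ne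
  have hmeas : MeasurableSet Aset := hc.measurableSet
  have hGexp : ContinuousOn (fun a => Real.exp (G a / lam)) Aset :=
    Real.continuous_exp.comp_continuousOn (hG.div_const lam)
  have hint : IntegrableOn (fun a => Real.exp (G a / lam)) Aset volume :=
    hGexp.integrableOn_compact hc
  have hlow : Real.exp (-B / lam) * vA ≤ ∫ a in Aset, Real.exp (G a / lam) := by
    have := setIntegral_mono_on (integrableOn_const hc.measure_lt_top.ne :
      IntegrableOn (fun _ => Real.exp (-B / lam)) Aset volume)
      hint hmeas (fun a ha => by
        have := (abs_le.1 (hB a ha)).1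
        exact Real.exp_le_exp.2 (div_le_div_of_nonneg_right this hlam0.le))
    simp only [setIntegral_const, smul_eq_mul] at this
    rw [hvAdef, ← measureReal_def]
    linarith
  have hhigh : (∫ a in Aset, Real.exp (G a / lam)) ≤ Real.exp (B / lam) * vA := by
    have := setIntegral_mono_on hint (integrableOn_const hc.measure_lt_top.ne :
      IntegrableOn (fun _ => Real.exp (B / lam)) Aset volume)
      hmeas (fun a ha => by
        have := (abs_le.1 (hB a ha)).2
        exact Real.exp_le_exp.2 (div_le_div_of_nonneg_right this hlam0.le))
    simp only [setIntegral_const, smul_eq_mul] at this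
    rw [hvAdef, ← measureReal_def]
    linarith
  have hpos : 0 < ∫ a in Aset, Real.exp (G a / lam) :=
    lt_of_lt_of_le (by positivity) hlow
  have hlog_hi : Real.log (∫ a in Aset, Real.exp (G a / lam)) ≤ B / lam + Real.log vA := by
    calc Real.log (∫ a in Aset, Real.exp (G a / lam))
        ≤ Real.log (Real.exp (B / lam) * vA) := Real.log_le_log hpos hhigh
      _ = B / lam + Real.log vA := by
          rw [Real.log_mul (Real.exp_ne_zero _) hvA.ne', Real.log_exp]
  have hlog_lo : -B / lam + Real.log vA ≤ Real.log (∫ a in Aset, Real.exp (G a / lam)) := by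
    calc -B / lam + Real.log vA
        = Real.log (Real.exp (-B / lam) * vA) := by
          rw [Real.log_mul (Real.exp_ne_zero _) hvA.ne', Real.log_exp]
      _ ≤ _ := Real.log_le_log (by positivity) hlow
  have habs : |lam * Real.log vA| ≤ |Real.log vA| := by
    rw [abs_mul, abs_of_pos hlam0]
    nlinarith [abs_nonneg (Real.log vA)]
  rw [abs_le]
  constructor
  · have := mul_le_mul_of_nonneg_left hlog_lo hlam0.le
    have h1 : lam * (-B / lam + Real.log vA) = -B + lam * Real.log vA := by
      field_simp
    rw [h1] at this
    have := neg_abs_le (lam * Real.log vA)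
    nlinarith [neg_abs_le (lam * Real.log vA)]
  · have := mul_le_mul_of_nonneg_left hlog_hi hlam0.le
    have h1 : lam * (B / lam + Real.log vA) = B + lam * Real.log vA := by
      field_simp
    rw [h1] at this
    nlinarith [le_abs_self (lam * Real.log vA)]

/-- Under Assumptions A1, A2 and the cone condition A4, for any sequence
`λ_n ∈ (0,1]` with `λ_n ↓ 0`, the regularized value functions are uniformly bounded:
`sup_{n, t ∈ 𝕋, u ∈ W} |V^{λ_n}(t,u)| < ∞`. -/
theorem regularized_value_functions_uniformly_bounded
    {l : ℕ} {S W S0 : Type*}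
    [MetricSpace S] [CompactSpace S] [Nonempty S]
    [MeasurableSpace S] [BorelSpace S] [SecondCountableTopology S]
    [Fintype W] [Nonempty W] [Fintype S0]
    (T : ℕ)
    (Aset : Set (EuclideanSpace ℝ (Fin l)))
    (hAcompact : IsCompact Aset) (hAne : Aset.Nonempty)
    (hALeb : 0 < MeasureTheory.volume Aset)
    (hAcone : ConeCondition Aset)
    (Ψ : ℕ → W → S0)
    (f0 : ℕ → S0 → EuclideanSpace ℝ (Fin l) → SubProb S → ℝ)
    (P0 : ℕ → W → EuclideanSpace ℝ (Fin l) → SubProb S → W → ℝ)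
    (g0 : S0 → SubProb S → ℝ)
    (hP0range : ∀ t u a mm u', P0 t u a mm u' ∈ Set.Icc (0 : ℝ) 1)
    (hP0sum : ∀ t u a mm, (∑ u' : W, P0 t u a mm u') = 1)
    (hP0cont : ∀ t u u', ContinuousOn
      (fun z : EuclideanSpace ℝ (Fin l) × SubProb S => P0 t u z.1 z.2 u')
      (Aset ×ˢ (Set.univ : Set (SubProb S))))
    (hP0Lip : ∃ K : NNReal, ∀ t u u' mm,
      LipschitzOnWith K (fun a => P0 t u a mm u') Aset)
    (hf0cont : ∀ t x, ContinuousOn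
      (fun z : EuclideanSpace ℝ (Fin l) × SubProb S => f0 t x z.1 z.2)
      (Aset ×ˢ (Set.univ : Set (SubProb S))))
    (hf0Lip : ∃ K : NNReal, ∀ t x mm, LipschitzOnWith K (fun a => f0 t x a mm) Aset)
    (hg0cont : ∀ x, Continuous fun mm : SubProb S => g0 x mm)
    (μT : W → SubProb S) (m : ℕ → W → SubProb S)
    -- the vanishing sequence of regularization parameters, λ_n ∈ (0,1], λ_n ↓ 0
    (lam : ℕ → ℝ) (hmem : ∀ n, lam n ∈ Set.Ioc (0 : ℝ) 1)
    (hanti : Antitone lam) (hlim : Tendsto lam atTop (𝓝 (0 : ℝ))) :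
    ∃ C : ℝ, ∀ (n : ℕ), ∀ t ≤ T, ∀ u : W,
      |Vlam T Aset Ψ f0 P0 g0 μT m (lam n) t u| ≤ C := by
  classical
  obtain ⟨Kf, hKf⟩ := hf0Lip
  obtain ⟨KP, hKP⟩ := hP0Lip
  obtain ⟨a0, ha0⟩ := hAne
  set s : Finset (ℕ × W) := Finset.range (T+1) ×ˢ Finset.univ with hs
  have hsne : s.Nonempty := ⟨(0, Classical.arbitrary W),
    Finset.mem_product.2 ⟨Finset.mem_range.2 (Nat.succ_pos T), Finset.mem_univ _⟩⟩
  set Mf : ℝ := s.sup' hsne (fun p => |f0 p.1 (Ψ p.1 p.2) a0 (m p.1 p.2)|)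
    + Kf * Metric.diam Aset with hMfdef
  have hMf : ∀ t ≤ T, ∀ u : W, ∀ a ∈ Aset, |f0 t (Ψ t u) a (m t u)| ≤ Mf := by
    intro t ht u a ha
    have h1 : |f0 t (Ψ t u) a0 (m t u)| ≤
        s.sup' hsne (fun p => |f0 p.1 (Ψ p.1 p.2) a0 (m p.1 p.2)|) :=
      Finset.le_sup' (fun p : ℕ × W => |f0 p.1 (Ψ p.1 p.2) a0 (m p.1 p.2)|)
        (show (t, u) ∈ s by
          rw [hs]
          exact Finset.mem_product.2
            ⟨Finset.mem_range.2 (Nat.lt_succ_of_le ht), Finset.mem_univ u⟩)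
    have h2 : dist (f0 t (Ψ t u) a (m t u)) (f0 t (Ψ t u) a0 (m t u))
        ≤ Kf * dist a a0 := (hKf t (Ψ t u) (m t u)).dist_le_mul a ha a0 ha0
    have h3 : dist a a0 ≤ Metric.diam Aset :=
      Metric.dist_le_diam_of_mem hAcompact.isBounded ha ha0
    have h4 : Kf * dist a a0 ≤ Kf * Metric.diam Aset :=
      mul_le_mul_of_nonneg_left h3 Kf.2
    have h5 : |f0 t (Ψ t u) a (m t u)| - |f0 t (Ψ t u) a0 (m t u)|
        ≤ dist (f0 t (Ψ t u) a (m t u)) (f0 t (Ψ t u) a0 (m t u)) := by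
      rw [Real.dist_eq]
      exact sub_le_iff_le_add'.2 (by
        have := abs_sub_abs_le_abs_sub (f0 t (Ψ t u) a (m t u)) (f0 t (Ψ t u) a0 (m t u))
        linarith)
    linarith
  have hMf0 : 0 ≤ Mf :=
    le_trans (abs_nonneg _) (hMf 0 (Nat.zero_le T) (Classical.arbitrary W) a0 ha0)
  set Mg : ℝ := Finset.univ.sup' Finset.univ_nonempty
    (fun u : W => |g0 (Ψ T u) (μT u)|) with hMgdef
  set D : ℝ := Mf + |Real.log (volume Aset).toReal| with hDdef
  have hD : 0 ≤ D := add_nonneg hMf0 (abs_nonneg _)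
  have main : ∀ j : ℕ, ∀ n : ℕ, ∀ u : W,
      |Vaux T Aset Ψ f0 P0 g0 μT m (lam n) j u| ≤ Mg + j * D := by
    intro j
    induction j with
    | zero =>
      intro n u
      have hz : Vaux T Aset Ψ f0 P0 g0 μT m (lam n) 0 u = g0 (Ψ T u) (μT u) := rfl
      rw [hz]
      have := Finset.le_sup' (fun u : W => |g0 (Ψ T u) (μT u)|) (Finset.mem_univ u)
      simp only [Nat.cast_zero, zero_mul, add_zero]
      exact this
    | succ j ih =>
      intro n u
      set t' := T - (j + 1) with ht'
      have ht'T : t' ≤ T := Nat.sub_le _ _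
      set G : EuclideanSpace ℝ (Fin l) → ℝ := fun a =>
        f0 t' (Ψ t' u) a (m t' u)
          + ∑ u' : W, Vaux T Aset Ψ f0 P0 g0 μT m (lam n) j u' * P0 t' u a (m t' u) u'
        with hG
      have hGc : ContinuousOn G Aset := by
        apply ContinuousOn.add ((hKf t' (Ψ t' u) (m t' u)).continuousOn)
        exact continuousOn_finset_sum _ fun u' _ =>
          continuousOn_const.mul ((hKP t' u u' (m t' u)).continuousOn)
      have hGb : ∀ a ∈ Aset, |G a| ≤ Mf + (Mg + j * D) := by
        intro a ha
        have hsum : |∑ u' : W, Vaux T Aset Ψ f0 P0 g0 μT m (lam n) j u'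
            * P0 t' u a (m t' u) u'| ≤ Mg + j * D := by
          calc |∑ u' : W, Vaux T Aset Ψ f0 P0 g0 μT m (lam n) j u'
                * P0 t' u a (m t' u) u'|
              ≤ ∑ u' : W, |Vaux T Aset Ψ f0 P0 g0 μT m (lam n) j u'
                * P0 t' u a (m t' u) u'| := Finset.abs_sum_le_sum_abs _ _
            _ ≤ ∑ u' : W, (Mg + j * D) * P0 t' u a (m t' u) u' := by
                apply Finset.sum_le_sum
                intro u' _
                rw [abs_mul, abs_of_nonneg (hP0range t' u a (m t' u) u').1]
                exact mul_le_mul_of_nonneg_right (ih n u')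
                  (hP0range t' u a (m t' u) u').1
            _ = (Mg + j * D) * ∑ u' : W, P0 t' u a (m t' u) u' := by
                rw [Finset.mul_sum]
            _ = Mg + j * D := by rw [hP0sum t' u a (m t' u), mul_one]
        calc |G a| ≤ |f0 t' (Ψ t' u) a (m t' u)|
              + |∑ u' : W, Vaux T Aset Ψ f0 P0 g0 μT m (lam n) j u'
                * P0 t' u a (m t' u) u'| := abs_add_le _ _
          _ ≤ Mf + (Mg + j * D) :=
              add_le_add (hMf t' ht'T u a ha) hsum
      have hkey := key_log_int_bound Aset hAcompact hALeb (hmem n) G hGc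
        (Mf + (Mg + j * D)) hGb
      have hun : Vaux T Aset Ψ f0 P0 g0 μT m (lam n) (j + 1) u
          = lam n * Real.log (∫ a in Aset, Real.exp (G a / lam n)) := rfl
      rw [hun]
      have : Mf + (Mg + j * D) + |Real.log (volume Aset).toReal|
          = Mg + (j + 1 : ℕ) * D := by
        simp only [hDdef]
        push_cast
        ring
      rw [← this]
      exact hkey
  refine ⟨Mg + T * D, fun n t ht u => ?_⟩
  have h1 := main (T - t) n u
  have h2 : ((T - t : ℕ) : ℝ) ≤ (T : ℝ) := by
    exact_mod_cast Nat.sub_le T t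
  have h3 : ((T - t : ℕ) : ℝ) * D ≤ (T : ℝ) * D := mul_le_mul_of_nonneg_right h2 hD
  calc |Vlam T Aset Ψ f0 P0 g0 μT m (lam n) t u|
      = |Vaux T Aset Ψ f0 P0 g0 μT m (lam n) (T - t) u| := rfl
    _ ≤ Mg + (T - t : ℕ) * D := h1
    _ ≤ Mg + T * D := by linarith
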